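/- There exists an absolute constant K such that for every complex z with |z| ≤ 1 and |arg(z)| ≤ s < π/2, the imaginary part of arccos(z) satisfies |Im(arccos(z))| ≤ K √s. -/

import Mathlib

/-- The principal branch of the complex arccosine,
`arccos z = -i log (z + i (1 - z²)^(1/2))`. -/
noncomputable def carccos (z : ℂ) : ℂ :=
  -Complex.I * Complex.log (z + Complex.I * (1 - z ^ 2) ^ ((1 : ℂ) / 2))

private lemma le_of_sq_le_sq' (a b : ℝ) (h : a ^ 2 ≤ b ^ 2) (ha : 0 ≤ a) (hb : 0 ≤ b) :
    a ≤ b := by nlinarith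

private lemma keyN (x y s P Q : ℝ) (hxy : x ^ 2 + y ^ 2 ≤ 1) (hy2 : y ^ 2 ≤ s)
    (hy2' : y ^ 2 ≤ s ^ 2) (hs0 : 0 ≤ s)
    (hre : P ^ 2 - Q ^ 2 = 1 - x ^ 2 + y ^ 2) (himq : P * Q = -(x * y)) :
    P ^ 2 + Q ^ 2 ≤ 1 - x ^ 2 - y ^ 2 + 2 * s := by
  have hA0' : 0 ≤ 1 - x ^ 2 - y ^ 2 := by linarith
  have hNid : (P ^ 2 + Q ^ 2) ^ 2
      = (1 - x ^ 2 + y ^ 2) ^ 2 + 4 * (x * y) ^ 2 := by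
    linear_combination (P ^ 2 - Q ^ 2 + (1 - x ^ 2 + y ^ 2)) * hre
      + (4 * (P * Q) - 4 * (x * y)) * himq
  have k1 : 0 ≤ (1 - x ^ 2 - y ^ 2) * (s - y ^ 2) := mul_nonneg hA0' (by linarith)
  have k2 : y ^ 2 * (x ^ 2 + y ^ 2) ≤ s ^ 2 := by
    nlinarith [mul_nonneg (sq_nonneg y) hA0']
  have hN2 : (P ^ 2 + Q ^ 2) ^ 2 ≤ (1 - x ^ 2 - y ^ 2 + 2 * s) ^ 2 := by
    nlinarith [hNid, k1, k2]
  exact le_of_sq_le_sq' _ _ hN2 (by positivity) (by linarith)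

private lemma keyC (x y s P Q : ℝ) (hxy : x ^ 2 + y ^ 2 ≤ 1) (hy2 : y ^ 2 ≤ s)
    (hy2' : y ^ 2 ≤ s ^ 2) (hs0 : 0 ≤ s)
    (hre : P ^ 2 - Q ^ 2 = 1 - x ^ 2 + y ^ 2) (himq : P * Q = -(x * y)) :
    (y * P - x * Q) ^ 2 ≤ s ^ 2 + s := by
  have hA0' : 0 ≤ 1 - x ^ 2 - y ^ 2 := by linarith
  have hN := keyN x y s P Q hxy hy2 hy2' hs0 hre himq
  have hid : 2 * (y * P - x * Q) ^ 2
      = (x ^ 2 + y ^ 2) * (P ^ 2 + Q ^ 2) + y ^ 2 - x ^ 2 + (x ^ 2 + y ^ 2) ^ 2 := by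
    linear_combination (y ^ 2 - x ^ 2) * hre - 4 * x * y * himq
  have hk3 := mul_le_mul_of_nonneg_left hN (by positivity : (0:ℝ) ≤ x ^ 2 + y ^ 2)
  nlinarith [hid, hk3, mul_nonneg hs0 hA0', hy2']

private lemma keyW (x y s t P Q : ℝ) (hxy : x ^ 2 + y ^ 2 ≤ 1) (hy2 : y ^ 2 ≤ s)
    (hy2' : y ^ 2 ≤ s ^ 2) (hs0 : 0 ≤ s) (hts : t ^ 2 = s) (ht0 : 0 ≤ t)
    (hre : P ^ 2 - Q ^ 2 = 1 - x ^ 2 + y ^ 2) (himq : P * Q = -(x * y)) :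
    (x - Q) ^ 2 + (y + P) ^ 2 ≤ (1 + 3 * t) ^ 2
      ∧ (x + Q) ^ 2 + (y - P) ^ 2 ≤ (1 + 3 * t) ^ 2 := by
  have hN := keyN x y s P Q hxy hy2 hy2' hs0 hre himq
  have hC := keyC x y s P Q hxy hy2 hy2' hs0 hre himq
  have hs2 : s ^ 2 = t ^ 4 := by rw [← hts]; ring
  have hct : (y * P - x * Q) ^ 2 ≤ (t ^ 2 + t) ^ 2 := by
    nlinarith [hC, hs2, hts, pow_nonneg ht0 3]
  have hcle : y * P - x * Q ≤ t ^ 2 + t := by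
    nlinarith [hct, sq_nonneg (y * P - x * Q - t ^ 2 - t), ht0, sq_nonneg t]
  have hcge : -(t ^ 2 + t) ≤ y * P - x * Q := by
    nlinarith [hct, sq_nonneg (y * P - x * Q + t ^ 2 + t), ht0, sq_nonneg t]
  constructor
  · nlinarith [hN, hcle, hts, ht0, sq_nonneg t]
  · nlinarith [hN, hcge, hts, ht0, sq_nonneg t]

set_option maxHeartbeats 1000000 in
theorem im_arccos_bound :
    ∃ K > (0 : ℝ), ∀ s : ℝ, ∀ z : ℂ,
      ‖z‖ ≤ 1 → |Complex.arg z| ≤ s → s < Real.pi / 2 →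
      |(carccos z).im| ≤ K * Real.sqrt s := by
  refine ⟨3, by norm_num, ?_⟩
  intro s z hz harg hsπ
  have hs0 : 0 ≤ s := (abs_nonneg _).trans harg
  have hts : Real.sqrt s ^ 2 = s := Real.sq_sqrt hs0
  set t := Real.sqrt s with htdef
  have ht0 : 0 ≤ t := Real.sqrt_nonneg s
  clear_value t
  have hgoal : (carccos z).im
      = -Real.log (‖z + Complex.I * ((1 - z^2) ^ ((1:ℂ)/2))‖) := by
    simp [carccos, Complex.mul_im, Complex.neg_im, Complex.neg_re, Complex.I_re,
      Complex.I_im, Complex.log_re]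
  rw [hgoal]
  set u := (1 - z ^ 2) ^ ((1 : ℂ) / 2) with hudef
  have hxy : z.re ^ 2 + z.im ^ 2 ≤ 1 := by
    have h1 := Complex.sq_norm z
    rw [Complex.normSq_apply] at h1
    nlinarith [norm_nonneg z, hz]
  have hy : |z.im| ≤ s := by
    have h1 := Complex.norm_mul_sin_arg z
    have h2 : |Real.sin z.arg| ≤ |z.arg| := Real.abs_sin_le_abs
    calc |z.im| = ‖z‖ * |Real.sin z.arg| := by
          rw [← h1, abs_mul, abs_of_nonneg (norm_nonneg z)]
      _ ≤ 1 * s := mul_le_mul hz (h2.trans harg) (abs_nonneg _) zero_le_one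
      _ = s := one_mul s
  have hy1 : |z.im| ≤ 1 := by
    nlinarith [sq_abs z.im, abs_nonneg z.im, sq_nonneg z.re, hxy]
  have hy2 : z.im ^ 2 ≤ s := by
    nlinarith [sq_abs z.im, abs_nonneg z.im, hy, hy1, hs0]
  have hy2' : z.im ^ 2 ≤ s ^ 2 := by
    nlinarith [sq_abs z.im, abs_nonneg z.im, hy]
  by_cases hcase : 1 - z ^ 2 = 0
  · have hu0 : u = 0 := by rw [hudef, hcase]; exact Complex.zero_cpow (by norm_num)
    have h2 : z ^ 2 = 1 := by linear_combination -hcase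
    have h3 : ‖z‖ ^ 2 = 1 := by rw [← norm_pow, h2, norm_one]
    have habs : ‖z‖ = 1 := by
      rw [← Real.sqrt_sq (norm_nonneg z), h3, Real.sqrt_one]
    rw [hu0]
    simp [habs]
    positivity
  · have hu2 : u * u = 1 - z ^ 2 := by
      rw [hudef, ← Complex.cpow_add _ _ hcase]
      norm_num
    clear_value u
    have h1 := congrArg Complex.re hu2
    have h2 := congrArg Complex.im hu2
    simp [Complex.mul_re, Complex.mul_im, Complex.sub_re, Complex.sub_im, sq] at h1 h2
    have hre : u.re ^ 2 - u.im ^ 2 = 1 - z.re ^ 2 + z.im ^ 2 := by linarith [h1]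
    have himq : u.re * u.im = -(z.re * z.im) := by linarith [h2]
    obtain ⟨hq1, hq2⟩ := keyW z.re z.im s t u.re u.im hxy hy2 hy2' hs0 hts ht0 hre himq
    have hw2 : ‖z + Complex.I * u‖ ^ 2
        = (z.re - u.im) ^ 2 + (z.im + u.re) ^ 2 := by
      rw [Complex.sq_norm, Complex.normSq_apply]
      simp [Complex.add_re, Complex.add_im, Complex.mul_re, Complex.mul_im]
      ring
    have hw2' : ‖z - Complex.I * u‖ ^ 2
        = (z.re + u.im) ^ 2 + (z.im - u.re) ^ 2 := by
      rw [Complex.sq_norm, Complex.normSq_apply]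
      simp [Complex.sub_re, Complex.sub_im, Complex.mul_re, Complex.mul_im]
      ring
    have hwb : ‖z + Complex.I * u‖ ≤ 1 + 3 * t :=
      le_of_sq_le_sq' _ _ (hw2 ▸ hq1) (norm_nonneg _) (by positivity)
    have hwb' : ‖z - Complex.I * u‖ ≤ 1 + 3 * t :=
      le_of_sq_le_sq' _ _ (hw2' ▸ hq2) (norm_nonneg _) (by positivity)
    have hprod : (z + Complex.I * u) * (z - Complex.I * u) = 1 := by
      linear_combination hu2 - u * u * Complex.I_sq
    have habsprod : ‖z + Complex.I * u‖ * ‖z - Complex.I * u‖ = 1 := by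
      rw [← norm_mul, hprod, norm_one]
    have hw0 : 0 < ‖z + Complex.I * u‖ := by
      rcases (norm_nonneg (z + Complex.I * u)).lt_or_eq with h | h
      · exact h
      · exfalso; rw [← h] at habsprod; simp at habsprod
    have hw0' : 0 < ‖z - Complex.I * u‖ := by
      rcases (norm_nonneg (z - Complex.I * u)).lt_or_eq with h | h
      · exact h
      · exfalso; rw [← h] at habsprod; simp at habsprod
    have hloga : Real.log (‖z + Complex.I * u‖) ≤ 3 * t :=
      (Real.log_le_sub_one_of_pos hw0).trans (by linarith)
    have hloga' : Real.log (‖z - Complex.I * u‖) ≤ 3 * t :=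
      (Real.log_le_sub_one_of_pos hw0').trans (by linarith)
    have hsum : Real.log (‖z + Complex.I * u‖)
        + Real.log (‖z - Complex.I * u‖) = 0 := by
      rw [← Real.log_mul (ne_of_gt hw0) (ne_of_gt hw0'), habsprod, Real.log_one]
    rw [abs_neg, abs_le]
    constructor <;> linarith
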